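/- Let τ be an invertible measure-preserving transformation of a probability space (X, ℬ, p), let E ∈ ℬ with p(E) > 0, and suppose f = 1_E - p(E) is a τ-coboundary: f = h - h∘τ with h measurable. Then exp(2πi p(E)) is an eigenvalue of the Koopman operator of τ, with eigenfunction H = exp(2πi h) satisfying H∘τ = exp(-2πi p(E)) H (equivalently H∘τ⁻¹ = exp(2πi p(E))H). In particular, if 0 < p(E) < 1 then τ is not weakly mixing. -/

import Mathlib

open MeasureTheory ENNReal Complex

/-- If 1_E - p(E) = h - h∘τ with h measurable, then H = exp(2πi h) is a
unimodular eigenfunction of the Koopman operator of τ with eigenvalue exp(2πi p(E)),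
and when 0 < p(E) < 1 this eigenvalue is ≠ 1, so τ is not weakly mixing (it has a
nonconstant unimodular eigenfunction with eigenvalue ≠ 1). -/
theorem stmt6 {X : Type*} [MeasurableSpace X] (μ : Measure X) [IsProbabilityMeasure μ]
    (τ τi : X → X) (hτ : MeasurePreserving τ μ μ) (hτi : MeasurePreserving τi μ μ)
    (hinv : ∀ x, τi (τ x) = x ∧ τ (τi x) = x)
    (E : Set X) (hE : MeasurableSet E) (hEpos : 0 < μ E)
    (h : X → ℝ) (hmeas : Measurable h)
    (hcob : ∀ᵐ x ∂μ, Set.indicator E (fun _ => (1 : ℝ)) x - (μ E).toReal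
      = h x - h (τ x))
    (H : X → ℂ)
    (hH : ∀ x, H x = Complex.exp (2 * Real.pi * Complex.I * (h x))) :
    (∀ x, ‖H x‖ = 1) ∧
    (∀ᵐ x ∂μ, H (τ x) = Complex.exp (2 * Real.pi * Complex.I * (μ E).toReal) * H x) ∧
    (μ E < 1 →
      (Complex.exp (2 * Real.pi * Complex.I * (μ E).toReal) ≠ 1 ∧
        ∃ (c : ℂ) (G : X → ℂ), c ≠ 1 ∧ Measurable G ∧ (∀ x, ‖G x‖ = 1) ∧
          ∀ᵐ x ∂μ, G (τ x) = c * G x)) := by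
  have habs : ∀ x, ‖H x‖ = 1 := by
    intro x
    rw [hH x]
    rw [Complex.norm_exp]
    have : (2 * Real.pi * Complex.I * (h x)).re = 0 := by
      simp [Complex.mul_re, Complex.mul_im]
    rw [this, Real.exp_zero]
  have heig : ∀ᵐ x ∂μ, H (τ x) = Complex.exp (2 * Real.pi * Complex.I * (μ E).toReal) * H x := by
    filter_upwards [hcob] with x hx
    rw [hH (τ x), hH x]
    set r : ℝ := Set.indicator E (fun _ => (1 : ℝ)) x with hr
    have hht : (h (τ x) : ℂ) = (h x : ℂ) - (r : ℂ) + ((μ E).toReal : ℂ) := by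
      have : h (τ x) = h x - r + (μ E).toReal := by linarith [hx]
      rw [this]; push_cast; ring
    have hr01 : r = 0 ∨ r = 1 := by
      by_cases hxE : x ∈ E
      · right; simp [hr, Set.indicator_of_mem hxE]
      · left; simp [hr, Set.indicator_of_notMem hxE]
    have hind : Complex.exp (2 * Real.pi * Complex.I * (-(r : ℂ))) = 1 := by
      rcases hr01 with h0 | h1
      · simp [h0]
      · rw [h1]
        rw [show (2 : ℂ) * Real.pi * Complex.I * (-(1:ℝ)) = (-1 : ℤ) * (2 * Real.pi * Complex.I) by push_cast; ring]
        exact Complex.exp_int_mul_two_pi_mul_I (-1)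
    rw [hht]
    have key : (2 : ℂ) * Real.pi * Complex.I * ((h x : ℂ) - (r : ℂ) + ((μ E).toReal : ℂ))
        = (2 * Real.pi * Complex.I * ((μ E).toReal : ℂ)) +
          ((2 * Real.pi * Complex.I * (-(r : ℂ))) + 2 * Real.pi * Complex.I * (h x : ℂ)) := by ring
    rw [key, Complex.exp_add, Complex.exp_add, hind, one_mul]
  refine ⟨habs, heig, fun hlt => ?_⟩
  have h0 : 0 < (μ E).toReal := ENNReal.toReal_pos hEpos.ne' (hlt.trans_le le_top).ne
  have h1 : (μ E).toReal < 1 := by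
    rw [show (1:ℝ) = (1:ℝ≥0∞).toReal by simp]
    exact ENNReal.toReal_strict_mono one_ne_top hlt
  have hne : Complex.exp (2 * Real.pi * Complex.I * (μ E).toReal) ≠ 1 := by
    intro heq
    rw [Complex.exp_eq_one_iff] at heq
    rcases heq with ⟨n, hn⟩
    have h2 : (2 * (Real.pi : ℂ) * Complex.I) ≠ 0 :=
      mul_ne_zero (mul_ne_zero two_ne_zero (by exact_mod_cast Real.pi_ne_zero)) Complex.I_ne_zero
    have hc : ((μ E).toReal : ℂ) = (n : ℂ) := mul_left_cancel₀ h2 (by rw [hn]; ring)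
    have hrn : (μ E).toReal = (n : ℝ) := by exact_mod_cast hc
    have hn0 : (0 : ℝ) < n := by rw [← hrn]; exact h0
    have hn1 : (n : ℝ) < 1 := by rw [← hrn]; exact h1
    have : (0 : ℤ) < n := by exact_mod_cast hn0
    have : (1 : ℤ) ≤ n := this
    have : (1 : ℝ) ≤ (n : ℝ) := by exact_mod_cast this
    linarith
  refine ⟨hne, Complex.exp (2 * Real.pi * Complex.I * (μ E).toReal), H, hne, ?_, habs, heig⟩
  have : H = fun x => Complex.exp (2 * Real.pi * Complex.I * (h x)) := funext hH
  rw [this]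
  exact Complex.measurable_exp.comp (by fun_prop)
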